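/- If a group G acts freely on the real line by orientation-preserving homeomorphisms, then G is abelian. -/

import Mathlib

open Filter Topology

namespace HolderProof

variable {G : Type*} [Group G]

/-- application of a product -/
lemma mulApp (ρ : G →* Equiv.Perm ℝ) (g h : G) (x : ℝ) : ρ (g * h) x = ρ g (ρ h x) := by
  rw [map_mul]; rfl

lemma appInv (ρ : G →* Equiv.Perm ℝ) (g : G) (w : ℝ) : ρ g (ρ g⁻¹ w) = w := by
  rw [map_inv]; exact (ρ g).apply_symm_apply w

lemma invApp (ρ : G →* Equiv.Perm ℝ) (g : G) (w : ℝ) : ρ g⁻¹ (ρ g w) = w := by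
  rw [map_inv]; exact (ρ g).symm_apply_apply w

/-- `g` moves every point to the right -/
def Pos (ρ : G →* Equiv.Perm ℝ) (g : G) : Prop := ∀ x : ℝ, x < ρ g x

/-- pointwise strict order -/
def Lt (ρ : G →* Equiv.Perm ℝ) (g h : G) : Prop := ∀ x : ℝ, ρ g x < ρ h x

lemma smono (ρ : G →* Equiv.Perm ℝ) (hmono : ∀ g : G, Monotone (ρ g)) (g : G) :
    StrictMono (ρ g) :=
  (hmono g).strictMono_of_injective (ρ g).injective

lemma pos_or_pos_inv (ρ : G →* Equiv.Perm ℝ)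
    (hcont : ∀ g : G, Continuous (ρ g)) (hmono : ∀ g : G, Monotone (ρ g))
    (hfree : ∀ g : G, g ≠ 1 → ∀ x : ℝ, ρ g x ≠ x)
    (g : G) (hg : g ≠ 1) : Pos ρ g ∨ Pos ρ g⁻¹ := by
  by_contra hcon
  push_neg at hcon
  obtain ⟨h1, h2⟩ := hcon
  simp only [Pos, not_forall, not_lt] at h1 h2
  obtain ⟨x, hx⟩ := h1
  obtain ⟨y, hy⟩ := h2
  have hx' : ρ g x < x := lt_of_le_of_ne hx (hfree g hg x)
  have hy' : y < ρ g y := by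
    have h3 : ρ g (ρ g⁻¹ y) ≤ ρ g y := hmono g hy
    rw [appInv] at h3
    exact lt_of_le_of_ne h3 (Ne.symm (hfree g hg y))
  have hf : Continuous (fun z : ℝ => ρ g z - z) := (hcont g).sub continuous_id
  have h0 : (0 : ℝ) ∈ Set.Icc (ρ g x - x) (ρ g y - y) := ⟨by linarith, by linarith⟩
  obtain ⟨z, hz⟩ := intermediate_value_univ x y hf h0
  have hz' : ρ g z - z = 0 := hz
  exact hfree g hg z (by linarith)

lemma lt_trich (ρ : G →* Equiv.Perm ℝ)
    (hcont : ∀ g : G, Continuous (ρ g)) (hmono : ∀ g : G, Monotone (ρ g))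
    (hfree : ∀ g : G, g ≠ 1 → ∀ x : ℝ, ρ g x ≠ x)
    (g h : G) : Lt ρ g h ∨ g = h ∨ Lt ρ h g := by
  by_cases he : g = h
  · exact Or.inr (Or.inl he)
  have hne : h * g⁻¹ ≠ 1 := by
    simp only [ne_eq, mul_inv_eq_one]
    exact Ne.symm he
  rcases pos_or_pos_inv ρ hcont hmono hfree _ hne with hp | hp
  · left; intro x
    have := hp (ρ g x)
    rwa [← mulApp, inv_mul_cancel_right] at this
  · right; right; intro x
    have he2 : (h * g⁻¹)⁻¹ = g * h⁻¹ := by group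
    rw [he2] at hp
    have := hp (ρ h x)
    rwa [← mulApp, inv_mul_cancel_right] at this

lemma arch (ρ : G →* Equiv.Perm ℝ)
    (hcont : ∀ g : G, Continuous (ρ g))
    (ε : G) (hε : Pos ρ ε) (y C : ℝ) : ∃ n : ℕ, C ≤ ρ (ε ^ n) y := by
  by_contra hcon
  push_neg at hcon
  set u : ℕ → ℝ := fun n => ρ (ε ^ n) y with hu
  have hstep : ∀ n, u (n + 1) = ρ ε (u n) := by
    intro n
    simp only [hu]
    rw [pow_succ', mulApp]
  have humono : Monotone u :=
    monotone_nat_of_le_succ (fun n => by rw [hstep n]; exact (hε (u n)).le)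
  have hbdd : BddAbove (Set.range u) := ⟨C, by rintro _ ⟨n, rfl⟩; exact (hcon n).le⟩
  have hL := tendsto_atTop_ciSup humono hbdd
  set L := ⨆ n, u n with hLdef
  have h1 : Tendsto (fun n => u (n + 1)) atTop (𝓝 L) :=
    hL.comp (tendsto_add_atTop_nat 1)
  have h2 : Tendsto (fun n => ρ ε (u n)) atTop (𝓝 (ρ ε L)) :=
    ((hcont ε).tendsto L).comp hL
  have heq : (fun n => u (n + 1)) = fun n => ρ ε (u n) := funext hstep
  rw [heq] at h1
  exact absurd (tendsto_nhds_unique h2 h1) (ne_of_gt (hε L))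

lemma le_pow (ρ : G →* Equiv.Perm ℝ) (ε : G) (hε : Pos ρ ε) (n : ℕ) (x : ℝ) :
    x ≤ ρ (ε ^ n) x := by
  induction n with
  | zero => simp
  | succ n ih =>
    calc x ≤ ρ (ε ^ n) x := ih
    _ ≤ ρ (ε ^ (n + 1)) x := by rw [pow_succ', mulApp]; exact (hε _).le

lemma zpow_mono (ρ : G →* Equiv.Perm ℝ) (ε : G) (hε : Pos ρ ε)
    {p q : ℤ} (hpq : p ≤ q) (x : ℝ) : ρ (ε ^ p) x ≤ ρ (ε ^ q) x := by
  have h1 : ε ^ q = ε ^ ((q - p).toNat) * ε ^ p := by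
    rw [← zpow_natCast, Int.toNat_of_nonneg (by omega), ← zpow_add]
    congr 1
    omega
  rw [h1, mulApp]
  exact le_pow ρ ε hε _ _

lemma squeeze (ρ : G →* Equiv.Perm ℝ)
    (hcont : ∀ g : G, Continuous (ρ g)) (hmono : ∀ g : G, Monotone (ρ g))
    (hfree : ∀ g : G, g ≠ 1 → ∀ x : ℝ, ρ g x ≠ x)
    (ε b : G) (hε : Pos ρ ε) :
    ∃ p : ℤ, (∀ x, ρ (ε ^ p) x ≤ ρ b x) ∧ (∀ x, ρ b x < ρ (ε ^ (p + 1)) x) := by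
  have Hinh : ∃ p : ℤ, ρ (ε ^ p) 0 ≤ ρ b 0 := by
    obtain ⟨n, hn⟩ := arch ρ hcont ε hε (ρ b 0) 0
    refine ⟨-(n : ℤ), ?_⟩
    have h1 : ρ (ε ^ (-(n : ℤ))) 0 ≤ ρ (ε ^ (-(n : ℤ))) (ρ (ε ^ n) (ρ b 0)) :=
      hmono _ hn
    have h2 : ρ (ε ^ (-(n : ℤ))) (ρ (ε ^ n) (ρ b 0)) = ρ b 0 := by
      rw [← zpow_natCast ε n, ← mulApp, ← zpow_add]
      norm_num
    linarith
  have Hbdd : ∃ m : ℤ, ∀ p : ℤ, ρ (ε ^ p) 0 ≤ ρ b 0 → p ≤ m := by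
    obtain ⟨n, hn⟩ := arch ρ hcont ε hε 0 (ρ b 0 + 1)
    refine ⟨n, ?_⟩
    intro p hp
    by_contra hlt
    push_neg at hlt
    have h1 : ρ (ε ^ (n : ℤ)) 0 ≤ ρ (ε ^ p) 0 := zpow_mono ρ ε hε hlt.le 0
    rw [zpow_natCast] at h1
    linarith
  obtain ⟨p, hp, hmax⟩ := Int.exists_greatest_of_bdd Hbdd Hinh
  have hp1 : ¬ ρ (ε ^ (p + 1)) 0 ≤ ρ b 0 := fun h => by have := hmax _ h; omega
  refine ⟨p, ?_, ?_⟩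
  · rcases lt_trich ρ hcont hmono hfree (ε ^ p) b with h | h | h
    · exact fun x => (h x).le
    · exact fun x => le_of_eq (by rw [h])
    · exact absurd hp (not_le.mpr (h 0))
  · rcases lt_trich ρ hcont hmono hfree b (ε ^ (p + 1)) with h | h | h
    · exact h
    · exact absurd (le_of_eq (by rw [← h])) hp1
    · exact absurd (h 0).le hp1

lemma comm_lt_sq (ρ : G →* Equiv.Perm ℝ)
    (hcont : ∀ g : G, Continuous (ρ g)) (hmono : ∀ g : G, Monotone (ρ g))
    (hfree : ∀ g : G, g ≠ 1 → ∀ x : ℝ, ρ g x ≠ x)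
    (a b ε : G) (hε : Pos ρ ε) (x : ℝ) :
    ρ (b⁻¹ * a⁻¹ * b * a) x < ρ (ε * ε) x := by
  obtain ⟨p, hap, hap'⟩ := squeeze ρ hcont hmono hfree ε a hε
  obtain ⟨q, hbq, hbq'⟩ := squeeze ρ hcont hmono hfree ε b hε
  have hba : ∀ z, ρ (b * a) z < ρ (ε ^ (q + 1 + (p + 1))) z := by
    intro z
    rw [mulApp, zpow_add, mulApp]
    calc ρ b (ρ a z) < ρ (ε ^ (q + 1)) (ρ a z) := hbq' _
    _ < ρ (ε ^ (q + 1)) (ρ (ε ^ (p + 1)) z) := smono ρ hmono _ (hap' z)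
  have hab : ∀ z, ρ (ε ^ (p + q)) z ≤ ρ (a * b) z := by
    intro z
    rw [mulApp, zpow_add, mulApp]
    calc ρ (ε ^ p) (ρ (ε ^ q) z) ≤ ρ (ε ^ p) (ρ b z) := hmono _ (hbq z)
    _ ≤ ρ a (ρ b z) := hap _
  have e1 : b⁻¹ * a⁻¹ * b * a = (a * b)⁻¹ * (b * a) := by group
  rw [e1, mulApp]
  have step1 : ρ (a * b)⁻¹ (ρ (b * a) x) < ρ (a * b)⁻¹ (ρ (ε ^ (q + 1 + (p + 1))) x) :=
    smono ρ hmono _ (hba x)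
  have hgen : ∀ w, ρ (a * b)⁻¹ w ≤ ρ (ε ^ (-(p + q))) w := by
    intro w
    have h1 := hab (ρ (a * b)⁻¹ w)
    rw [appInv] at h1
    have h2 := hmono (ε ^ (-(p + q))) h1
    have h3 : ρ (ε ^ (-(p + q))) (ρ (ε ^ (p + q)) (ρ (a * b)⁻¹ w)) = ρ (a * b)⁻¹ w := by
      rw [← mulApp, ← zpow_add, neg_add_cancel, zpow_zero, map_one]
      rfl
    rwa [h3] at h2
  have step2 : ρ (a * b)⁻¹ (ρ (ε ^ (q + 1 + (p + 1))) x) ≤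
      ρ (ε ^ (-(p + q))) (ρ (ε ^ (q + 1 + (p + 1))) x) := hgen _
  have e2 : ρ (ε ^ (-(p + q))) (ρ (ε ^ (q + 1 + (p + 1))) x) = ρ (ε * ε) x := by
    rw [← mulApp, ← zpow_add]
    have : -(p + q) + (q + 1 + (p + 1)) = 2 := by ring
    rw [this]
    have h4 : (2 : ℤ) = 1 + 1 := by norm_num
    rw [h4, zpow_add, zpow_one]
  linarith [step1, step2, e2.le, e2.ge]

lemma key (ρ : G →* Equiv.Perm ℝ)
    (hcont : ∀ g : G, Continuous (ρ g)) (hmono : ∀ g : G, Monotone (ρ g))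
    (hfree : ∀ g : G, g ≠ 1 → ∀ x : ℝ, ρ g x ≠ x)
    (a b : G) (hc : Pos ρ (b⁻¹ * a⁻¹ * b * a)) : False := by
  set c := b⁻¹ * a⁻¹ * b * a with hcdef
  by_cases hmin : ∃ h : G, Pos ρ h ∧ Lt ρ h c
  · -- there is a positive element strictly below c
    obtain ⟨h, hh, hhc⟩ := hmin
    have hch2 : ∀ x, ρ c x < ρ h (ρ h x) := by
      intro x
      have h0 := comm_lt_sq ρ hcont hmono hfree a b h hh x
      rw [mulApp ρ h h] at h0
      exact h0
    set k := h⁻¹ * c with hkdef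
    have hk : Pos ρ k := by
      intro x
      have h1 : ρ h⁻¹ (ρ h x) < ρ h⁻¹ (ρ c x) := smono ρ hmono h⁻¹ (hhc x)
      rw [invApp] at h1
      rwa [hkdef, mulApp]
    -- inner inequality : ρ h⁻¹ (ρ c x) < ρ h x
    have hinner : ∀ x, ρ h⁻¹ (ρ c x) < ρ h x := by
      intro x
      have h1 : ρ h⁻¹ (ρ c x) < ρ h⁻¹ (ρ h (ρ h x)) := smono ρ hmono h⁻¹ (hch2 x)
      rwa [invApp] at h1
    have claim2 : ∀ x, ρ (k * k) x < ρ (h⁻¹ * c * h) x := by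
      intro x
      have e1 : k * k = h⁻¹ * (c * (h⁻¹ * c)) := by rw [hkdef]; group
      have e2 : h⁻¹ * c * h = h⁻¹ * (c * h) := by group
      rw [e1, e2, mulApp ρ h⁻¹ (c * (h⁻¹ * c)), mulApp ρ c (h⁻¹ * c),
        mulApp ρ h⁻¹ c, mulApp ρ h⁻¹ (c * h), mulApp ρ c h]
      have h1 : ρ c (ρ h⁻¹ (ρ c x)) < ρ c (ρ h x) := smono ρ hmono c (hinner x)
      exact smono ρ hmono h⁻¹ h1
    -- conjugated commutator identity
    have econj : (h⁻¹ * b * h)⁻¹ * (h⁻¹ * a * h)⁻¹ * (h⁻¹ * b * h) * (h⁻¹ * a * h)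
        = h⁻¹ * c * h := by rw [hcdef]; group
    have final := comm_lt_sq ρ hcont hmono hfree (h⁻¹ * a * h) (h⁻¹ * b * h) k hk 0
    rw [econj] at final
    have := claim2 0
    linarith
  · -- c is the least positive element: everything is a power of c
    push_neg at hmin
    have hcne : c ≠ 1 := by
      intro h1
      have := hc 0
      rw [h1] at this
      simp at this
    have hpow : ∀ b' : G, ∃ p : ℤ, b' = c ^ p := by
      intro b'
      obtain ⟨p, hp, hp'⟩ := squeeze ρ hcont hmono hfree c b' hc
      refine ⟨p, ?_⟩
      set d := c ^ (-p) * b' with hddef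
      have hd1 : d = 1 := by
        by_contra hdne
        rcases pos_or_pos_inv ρ hcont hmono hfree d hdne with hpd | hpd
        · -- pos d : then d is positive and below c, contradicting minimality
          refine hmin d hpd ?_
          intro x
          have h1 : ρ b' x < ρ (c ^ p) (ρ c x) := by
            have := hp' x
            rwa [zpow_add_one, mulApp] at this
          have h2 : ρ (c ^ (-p)) (ρ b' x) < ρ (c ^ (-p)) (ρ (c ^ p) (ρ c x)) :=
            smono ρ hmono _ h1
          have h3 : ρ (c ^ (-p)) (ρ (c ^ p) (ρ c x)) = ρ c x := by
            rw [← mulApp, ← zpow_add, neg_add_cancel, zpow_zero, map_one]; rfl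
          rw [h3] at h2
          rwa [hddef, mulApp]
        · -- pos d⁻¹ contradicts c^p ≤ b'
          have hdinv : d⁻¹ = b'⁻¹ * c ^ p := by rw [hddef]; group
          rw [hdinv] at hpd
          have h1 := hpd 0
          rw [mulApp] at h1
          have h2 : ρ b' 0 < ρ b' (ρ b'⁻¹ (ρ (c ^ p) 0)) := smono ρ hmono b' h1
          rw [appInv] at h2
          exact absurd (hp 0) (not_le.mpr h2)
      -- d = 1 gives b' = c ^ p
      have h1 : c ^ (-p) * b' = 1 := by rw [← hddef, hd1]
      rw [zpow_neg] at h1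
      exact (inv_mul_eq_one.mp h1).symm
    obtain ⟨pa, hpa⟩ := hpow a
    obtain ⟨pb, hpb⟩ := hpow b
    have hcomm : b * a = a * b := by
      rw [hpa, hpb, ← zpow_add, ← zpow_add, add_comm]
    have : c = 1 := by
      rw [hcdef, mul_assoc, hcomm]
      group
    exact hcne this

end HolderProof

/-- Hölder's theorem: a group acting freely on the real line by
orientation-preserving homeomorphisms is abelian. -/
theorem holder_abelian (G : Type*) [Group G] (ρ : G →* Equiv.Perm ℝ)
    (hcont : ∀ g : G, Continuous (ρ g))
    (hmono : ∀ g : G, Monotone (ρ g))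
    (hfree : ∀ g : G, g ≠ 1 → ∀ x : ℝ, ρ g x ≠ x) :
    ∀ a b : G, a * b = b * a := by
  intro a b
  by_contra hab
  have hcne : b⁻¹ * a⁻¹ * b * a ≠ 1 := by
    intro h1
    apply hab
    have h3 : a⁻¹ * b * a = b := by
      calc a⁻¹ * b * a = b * (b⁻¹ * a⁻¹ * b * a) := by group
      _ = b := by rw [h1]; group
    calc a * b = a * (a⁻¹ * b * a) := by rw [h3]
    _ = b * a := by group
  rcases HolderProof.pos_or_pos_inv ρ hcont hmono hfree _ hcne with hp | hp
  · exact HolderProof.key ρ hcont hmono hfree a b hp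
  · have he : (b⁻¹ * a⁻¹ * b * a)⁻¹ = a⁻¹ * b⁻¹ * a * b := by group
    rw [he] at hp
    exact HolderProof.key ρ hcont hmono hfree b a hp
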